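/- arXiv:1209.5812 — 5 statements merged into one kernel-verified Lean document; each statement's English description precedes it below -/
import Mathlib

section
/- Let V be a 3×3 complex matrix all of whose entries are nonzero, and let m and n be 3×3 matrices with nonnegative integer entries. If for all real phases φ₁,φ₂,φ₃,ψ₁,ψ₂,ψ₃ the value of P(m,n) at the rephased matrix (with entries e^{iφ_i} V_{ij} e^{iψ_j}) equals P(m,n)(V), then for every i ∈ {1,2,3} the i-th row sum of m equals the i-th row sum of n and the i-th column sum of m equals the i-th column sum of n. -/
open scoped BigOperators

/-- The monomial `P(m,n)(V) = ∏ (V i j)^(m i j) · ∏ (conj (V k l))^(n k l)`. -/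
noncomputable def Pmono (m n : Matrix (Fin 3) (Fin 3) ℕ)
    (V : Matrix (Fin 3) (Fin 3) ℂ) : ℂ :=
  (∏ i : Fin 3, ∏ j : Fin 3, (V i j) ^ (m i j)) *
    ∏ k : Fin 3, ∏ l : Fin 3, (starRingEnd ℂ (V k l)) ^ (n k l)

/-- Rephasing of `V` by phases `φ i` (rows) and `ψ j` (columns). -/
noncomputable def rephase (φ ψ : Fin 3 → ℝ) (V : Matrix (Fin 3) (Fin 3) ℂ) :
    Matrix (Fin 3) (Fin 3) ℂ :=
  fun i j => Complex.exp ((φ i : ℂ) * Complex.I) * V i j * Complex.exp ((ψ j : ℂ) * Complex.I)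

lemma rephase_eval (m n : Matrix (Fin 3) (Fin 3) ℕ) (V : Matrix (Fin 3) (Fin 3) ℂ)
    (φ ψ : Fin 3 → ℝ) :
    Pmono m n (rephase φ ψ V) =
      Complex.exp ((∑ i : Fin 3, ∑ j : Fin 3,
        (((m i j : ℝ) - n i j) * (φ i + ψ j)) : ℝ) * Complex.I) * Pmono m n V := by
  have hconj : ∀ (x : ℝ), starRingEnd ℂ (Complex.exp ((x : ℂ) * Complex.I)) =
      Complex.exp (-((x : ℂ) * Complex.I)) := by
    intro x
    rw [← Complex.exp_conj]
    simp [Complex.conj_I]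
  unfold Pmono rephase
  simp only [map_mul, hconj, mul_pow, ← Complex.exp_nat_mul, ← Complex.exp_sum,
    Finset.prod_mul_distrib, ← Complex.exp_add]
  rw [show ((∑ i : Fin 3, ∑ j : Fin 3, (((m i j : ℝ) - n i j) * (φ i + ψ j)) : ℝ) : ℂ) * Complex.I
    = (∑ i : Fin 3, ∑ j : Fin 3, (((m i j : ℂ) - n i j) * (φ i + ψ j))) * Complex.I by push_cast; ring]
  rw [show ∀ a b c d p q : ℂ, (a*p)*b*((c*q)*d) = (a*b*c*d)*(p*q) from fun _ _ _ _ _ _ => by ring]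
  rw [← Complex.exp_add, ← Complex.exp_add, ← Complex.exp_add]
  congr 1
  simp only [Fin.sum_univ_three]
  ring

lemma exp_forces (a b : ℕ)
    (H : ∀ θ : ℝ, Complex.exp ((θ * ((a : ℝ) - b) : ℝ) * Complex.I) = 1) : a = b := by
  by_contra hab
  have hc : (a : ℝ) - b ≠ 0 := by
    intro h0
    apply hab
    exact_mod_cast sub_eq_zero.mp h0
  have := H (Real.pi / ((a : ℝ) - b))
  rw [div_mul_cancel₀ _ hc] at this
  simp [Complex.exp_pi_mul_I] at this
  norm_num at this


theorem rephasing_invariance_forces_equal_row_and_column_sums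
    (V : Matrix (Fin 3) (Fin 3) ℂ) (hV : ∀ i j : Fin 3, V i j ≠ 0)
    (m n : Matrix (Fin 3) (Fin 3) ℕ)
    (h : ∀ φ ψ : Fin 3 → ℝ, Pmono m n (rephase φ ψ V) = Pmono m n V) :
    (∀ i : Fin 3, ∑ j : Fin 3, m i j = ∑ j : Fin 3, n i j) ∧
      (∀ j : Fin 3, ∑ i : Fin 3, m i j = ∑ i : Fin 3, n i j) := by
  have hP : Pmono m n V ≠ 0 := by
    apply mul_ne_zero <;>
    · apply Finset.prod_ne_zero_iff.mpr
      intro i _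
      apply Finset.prod_ne_zero_iff.mpr
      intro j _
      apply pow_ne_zero
      simp [hV i j]
  have key : ∀ φ ψ : Fin 3 → ℝ,
      Complex.exp ((∑ i : Fin 3, ∑ j : Fin 3,
        (((m i j : ℝ) - n i j) * (φ i + ψ j)) : ℝ) * Complex.I) = 1 := by
    intro φ ψ
    have := h φ ψ
    rw [rephase_eval] at this
    field_simp at this
    rw [show ((∑ i : Fin 3, ∑ j : Fin 3, (((m i j : ℝ) - n i j) * (φ i + ψ j)) : ℝ) : ℂ)
      = ∑ i : Fin 3, ∑ j : Fin 3, (((m i j : ℂ) - n i j) * ((φ i : ℂ) + ψ j)) by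
        push_cast; ring]
    exact_mod_cast this
  constructor
  · intro i
    apply exp_forces
    intro θ
    have := key (fun k => if k = i then θ else 0) 0
    rw [show (∑ k : Fin 3, ∑ j : Fin 3,
        (((m k j : ℝ) - n k j) * ((if k = i then θ else 0) + (0 : Fin 3 → ℝ) j)))
        = θ * ((∑ j : Fin 3, (m i j : ℝ)) - ∑ j : Fin 3, (n i j : ℝ)) from ?_] at this
    · rw [show ((∑ j : Fin 3, m i j : ℕ) : ℝ) - ((∑ j : Fin 3, n i j : ℕ) : ℝ)
        = (∑ j : Fin 3, (m i j : ℝ)) - ∑ j : Fin 3, (n i j : ℝ) by push_cast; ring]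
      exact this
    · simp only [Pi.zero_apply, add_zero, mul_ite, mul_zero]
      rw [Finset.sum_comm]
      simp [Finset.sum_ite_eq', Finset.mul_sum, Finset.sum_sub_distrib, mul_comm, mul_sub]
  · intro j
    apply exp_forces
    intro θ
    have := key 0 (fun k => if k = j then θ else 0)
    rw [show (∑ i : Fin 3, ∑ l : Fin 3,
        (((m i l : ℝ) - n i l) * ((0 : Fin 3 → ℝ) i + (if l = j then θ else 0))))
        = θ * ((∑ i : Fin 3, (m i j : ℝ)) - ∑ i : Fin 3, (n i j : ℝ)) from ?_] at this
    · rw [show ((∑ i : Fin 3, m i j : ℕ) : ℝ) - ((∑ i : Fin 3, n i j : ℕ) : ℝ)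
        = (∑ i : Fin 3, (m i j : ℝ)) - ∑ i : Fin 3, (n i j : ℝ) by push_cast; ring]
      exact this
    · simp only [Pi.zero_apply, zero_add, mul_ite, mul_zero]
      simp [Finset.sum_ite_eq', Finset.mul_sum, Finset.sum_sub_distrib, mul_comm, mul_sub]
end

section
/- Let p be a p-matrix having either exactly 3 positive and exactly 4 negative entries, or exactly 4 positive and exactly 3 negative entries (hence exactly 2 zero entries). Then there exist positive integers n₁, n₂, a 4th-order fundamental p-matrix F and a 6th-order fundamental p-matrix G such that p = n₁F + n₂G. -/
set_option maxHeartbeats 1000000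


open scoped BigOperators

/-- A p-matrix: a 3×3 integer matrix all of whose row sums and column sums vanish. -/
def IsPMatrix (p : Matrix (Fin 3) (Fin 3) ℤ) : Prop :=
  (∀ i : Fin 3, ∑ j : Fin 3, p i j = 0) ∧ (∀ j : Fin 3, ∑ i : Fin 3, p i j = 0)

/-- A fundamental p-matrix: a nonzero p-matrix with all entries in {-1, 0, 1}. -/
def IsFundamental (p : Matrix (Fin 3) (Fin 3) ℤ) : Prop :=
  IsPMatrix p ∧ p ≠ 0 ∧ ∀ i j : Fin 3, p i j = -1 ∨ p i j = 0 ∨ p i j = 1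

/-- The number of nonzero entries of a 3×3 integer matrix. -/
def suppCard (p : Matrix (Fin 3) (Fin 3) ℤ) : ℕ :=
  (Finset.univ.filter fun ij : Fin 3 × Fin 3 => p ij.1 ij.2 ≠ 0).card

/-- The number of positive entries of a 3×3 integer matrix. -/
def posCard (p : Matrix (Fin 3) (Fin 3) ℤ) : ℕ :=
  (Finset.univ.filter fun ij : Fin 3 × Fin 3 => 0 < p ij.1 ij.2).card

/-- The number of negative entries of a 3×3 integer matrix. -/
def negCard (p : Matrix (Fin 3) (Fin 3) ℤ) : ℕ :=
  (Finset.univ.filter fun ij : Fin 3 × Fin 3 => p ij.1 ij.2 < 0).card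

/-- The number of zero entries of a 3×3 integer matrix. -/
def zeroCard (p : Matrix (Fin 3) (Fin 3) ℤ) : ℕ :=
  (Finset.univ.filter fun ij : Fin 3 × Fin 3 => p ij.1 ij.2 = 0).card

/-- The conclusion of the main theorem, abbreviated. -/
def Concl (p : Matrix (Fin 3) (Fin 3) ℤ) : Prop :=
  ∃ (n₁ n₂ : ℕ) (F G : Matrix (Fin 3) (Fin 3) ℤ),
      0 < n₁ ∧ 0 < n₂ ∧
      IsFundamental F ∧ suppCard F = 4 ∧
      IsFundamental G ∧ suppCard G = 6 ∧
      p = (n₁ : ℤ) • F + (n₂ : ℤ) • G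

lemma isPMatrix_neg {p : Matrix (Fin 3) (Fin 3) ℤ} (h : IsPMatrix p) : IsPMatrix (-p) := by
  constructor
  · intro i
    simp only [Matrix.neg_apply, Finset.sum_neg_distrib, h.1 i, neg_zero]
  · intro j
    simp only [Matrix.neg_apply, Finset.sum_neg_distrib, h.2 j, neg_zero]

lemma isFundamental_neg {p : Matrix (Fin 3) (Fin 3) ℤ} (h : IsFundamental p) :
    IsFundamental (-p) := by
  obtain ⟨h1, h2, h3⟩ := h
  refine ⟨isPMatrix_neg h1, by simpa using h2, fun i j => ?_⟩
  rcases h3 i j with h | h | h <;> simp [Matrix.neg_apply, h]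

lemma suppCard_neg (p : Matrix (Fin 3) (Fin 3) ℤ) : suppCard (-p) = suppCard p := by
  unfold suppCard
  congr 1
  ext ij
  simp [Matrix.neg_apply]

lemma concl_neg {p : Matrix (Fin 3) (Fin 3) ℤ} (h : Concl (-p)) : Concl p := by
  obtain ⟨n₁, n₂, F, G, h₁, h₂, hF, hF4, hG, hG6, heq⟩ := h
  refine ⟨n₁, n₂, -F, -G, h₁, h₂, isFundamental_neg hF, by rw [suppCard_neg]; exact hF4,
    isFundamental_neg hG, by rw [suppCard_neg]; exact hG6, ?_⟩
  have : p = -(-p) := by simp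
  rw [this, heq]
  ext i j
  simp [Matrix.neg_apply, Matrix.add_apply, Matrix.smul_apply]
  ring

lemma isPMatrix_submatrix {p : Matrix (Fin 3) (Fin 3) ℤ} (h : IsPMatrix p)
    (σ τ : Equiv.Perm (Fin 3)) : IsPMatrix (p.submatrix σ τ) := by
  constructor
  · intro i
    rw [← h.1 (σ i)]
    exact Fintype.sum_equiv τ _ _ (fun j => rfl)
  · intro j
    rw [← h.2 (τ j)]
    exact Fintype.sum_equiv σ _ _ (fun i => rfl)

lemma suppCard_submatrix (p : Matrix (Fin 3) (Fin 3) ℤ) (σ τ : Equiv.Perm (Fin 3)) :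
    suppCard (p.submatrix σ τ) = suppCard p := by
  unfold suppCard
  apply Finset.card_bij' (fun ij _ => (σ ij.1, τ ij.2)) (fun ij _ => (σ.symm ij.1, τ.symm ij.2)) <;>
    simp [Matrix.submatrix_apply]
  · exact fun a b h => (Finset.mem_filter.mp h).2
  · exact fun a b h => Finset.mem_filter.mpr ⟨Finset.mem_univ _, by simpa using h⟩

lemma isFundamental_submatrix {p : Matrix (Fin 3) (Fin 3) ℤ} (h : IsFundamental p)
    (σ τ : Equiv.Perm (Fin 3)) : IsFundamental (p.submatrix σ τ) := by
  obtain ⟨h1, h2, h3⟩ := h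
  refine ⟨isPMatrix_submatrix h1 σ τ, ?_, fun i j => h3 (σ i) (τ j)⟩
  intro hz
  apply h2
  ext i j
  have := congrFun (congrFun hz (σ.symm i)) (τ.symm j)
  simpa [Matrix.submatrix_apply] using this

lemma concl_submatrix {p : Matrix (Fin 3) (Fin 3) ℤ} (σ τ : Equiv.Perm (Fin 3))
    (h : Concl (p.submatrix σ τ)) : Concl p := by
  obtain ⟨n₁, n₂, F, G, h₁, h₂, hF, hF4, hG, hG6, heq⟩ := h
  refine ⟨n₁, n₂, F.submatrix σ.symm τ.symm, G.submatrix σ.symm τ.symm, h₁, h₂,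
    isFundamental_submatrix hF _ _, by rw [suppCard_submatrix]; exact hF4,
    isFundamental_submatrix hG _ _, by rw [suppCard_submatrix]; exact hG6, ?_⟩
  ext i j
  have := congrFun (congrFun heq (σ.symm i)) (τ.symm j)
  simp only [Matrix.submatrix_apply, Matrix.add_apply, Matrix.smul_apply,
    Equiv.apply_symm_apply] at this ⊢
  exact this

/-- A p-matrix with vanishing (0,0) and (1,1) entries has a canonical form. -/
lemma pmatrix_form {q : Matrix (Fin 3) (Fin 3) ℤ} (hq : IsPMatrix q)
    (h00 : q 0 0 = 0) (h11 : q 1 1 = 0) :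
    q = !![0, q 0 1, -(q 0 1); q 1 0, 0, -(q 1 0); -(q 1 0), -(q 0 1), q 0 1 + q 1 0] := by
  have r0 := hq.1 0
  have r1 := hq.1 1
  have r2 := hq.1 2
  have c0 := hq.2 0
  have c1 := hq.2 1
  have c2 := hq.2 2
  simp only [Fin.sum_univ_three] at r0 r1 r2 c0 c1 c2
  ext i j
  fin_cases i <;> fin_cases j <;>
    simp [Matrix.vecHead, Matrix.vecTail] <;> linarith

lemma concl_canon_pos (b c : ℤ) (hb : 0 < b) (hc : c ≠ 0) (hbc : b + c ≠ 0) :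
    Concl !![0, b, -b; c, 0, -c; -c, -b, b + c] := by
  have hFund : ∀ M : Matrix (Fin 3) (Fin 3) ℤ,
      (IsPMatrix M ∧ M ≠ 0 ∧ ∀ i j : Fin 3, M i j = -1 ∨ M i j = 0 ∨ M i j = 1) →
      IsFundamental M := fun _ h => h
  rcases lt_or_gt_of_ne hc with hc' | hc'
  · rcases lt_or_gt_of_ne hbc with hbc' | hbc'
    · -- b > 0, c < 0, b + c < 0
      refine ⟨(-(b+c)).toNat, (-c).toNat, !![0,-1,1;0,0,0;0,1,-1], !![0,1,-1;-1,0,1;1,-1,0],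
        by omega, by omega, ?_, ?_, ?_, ?_, ?_⟩
      · unfold IsFundamental IsPMatrix; unfold Matrix at *; decide
      · unfold suppCard; decide
      · unfold IsFundamental IsPMatrix; unfold Matrix at *; decide
      · unfold suppCard; decide
      · ext i j
        fin_cases i <;> fin_cases j <;>
          simp [Matrix.add_apply, Matrix.smul_apply, Matrix.vecHead, Matrix.vecTail] <;> omega
    · -- b > 0, c < 0, b + c > 0
      refine ⟨(b+c).toNat, (-c).toNat, !![0,1,-1;0,0,0;0,-1,1], !![0,1,-1;-1,0,1;1,-1,0],
        by omega, by omega, ?_, ?_, ?_, ?_, ?_⟩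
      · unfold IsFundamental IsPMatrix; unfold Matrix at *; decide
      · unfold suppCard; decide
      · unfold IsFundamental IsPMatrix; unfold Matrix at *; decide
      · unfold suppCard; decide
      · ext i j
        fin_cases i <;> fin_cases j <;>
          simp [Matrix.add_apply, Matrix.smul_apply, Matrix.vecHead, Matrix.vecTail] <;> omega
  · -- b > 0, c > 0
    refine ⟨(b+c).toNat, b.toNat, !![0,0,0;1,0,-1;-1,0,1], !![0,1,-1;-1,0,1;1,-1,0],
      by omega, by omega, ?_, ?_, ?_, ?_, ?_⟩
    · unfold IsFundamental IsPMatrix; unfold Matrix at *; decide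
    · unfold suppCard; decide
    · unfold IsFundamental IsPMatrix; unfold Matrix at *; decide
    · unfold suppCard; decide
    · ext i j
      fin_cases i <;> fin_cases j <;>
        simp [Matrix.add_apply, Matrix.smul_apply, Matrix.vecHead, Matrix.vecTail] <;> omega

lemma concl_canon (b c : ℤ) (hb : b ≠ 0) (hc : c ≠ 0) (hbc : b + c ≠ 0) :
    Concl !![0, b, -b; c, 0, -c; -c, -b, b + c] := by
  rcases lt_or_gt_of_ne hb with hb' | hb'
  · apply concl_neg
    have h := concl_canon_pos (-b) (-c) (by omega) (by omega) (by omega)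
    have heq : -!![0, b, -b; c, 0, -c; -c, -b, b + c] =
        !![0, -b, -(-b); -c, 0, -(-c); -(-c), -(-b), -b + -c] := by
      ext i j
      fin_cases i <;> fin_cases j <;> simp [Matrix.neg_apply, Matrix.vecHead, Matrix.vecTail] <;> ring
    rw [heq]
    exact h
  · exact concl_canon_pos b c hb' hc hbc

lemma exists_perm_fin3 : ∀ a b : Fin 3, a ≠ b →
    ∃ σ : Equiv.Perm (Fin 3), σ 0 = a ∧ σ 1 = b := by decide

lemma exists_third_fin3 : ∀ j₀ j₁ : Fin 3, j₀ ≠ j₁ → ∃ j₂, j₀ ≠ j₂ ∧ j₁ ≠ j₂ := by decide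

lemma three_sum_zero {f : Fin 3 → ℤ} (h : ∑ j, f j = 0) {j₀ j₁ j₂ : Fin 3}
    (h01 : j₀ ≠ j₁) (h02 : j₀ ≠ j₂) (h12 : j₁ ≠ j₂)
    (hz0 : f j₀ = 0) (hz1 : f j₁ = 0) : f j₂ = 0 := by
  rw [Fin.sum_univ_three] at h
  fin_cases j₀ <;> fin_cases j₁ <;> fin_cases j₂ <;> simp_all <;> linarith

theorem p_matrix_two_zero_entries_decomposition
    (p : Matrix (Fin 3) (Fin 3) ℤ) (hp : IsPMatrix p)
    (hsigns : (posCard p = 3 ∧ negCard p = 4) ∨ (posCard p = 4 ∧ negCard p = 3)) :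
    ∃ (n₁ n₂ : ℕ) (F G : Matrix (Fin 3) (Fin 3) ℤ),
      0 < n₁ ∧ 0 < n₂ ∧
      IsFundamental F ∧ suppCard F = 4 ∧
      IsFundamental G ∧ suppCard G = 6 ∧
      p = (n₁ : ℤ) • F + (n₂ : ℤ) • G := by
  -- Step 1: the zero set has exactly two elements.
  have h7 : posCard p + negCard p = 7 := by
    rcases hsigns with ⟨h1, h2⟩ | ⟨h1, h2⟩ <;> omega
  set Z : Finset (Fin 3 × Fin 3) :=
    Finset.univ.filter fun ij : Fin 3 × Fin 3 => p ij.1 ij.2 = 0 with hZ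
  have hsplit : (Finset.univ.filter fun ij : Fin 3 × Fin 3 => ¬ p ij.1 ij.2 = 0).card
      = posCard p + negCard p := by
    unfold posCard negCard
    rw [← Finset.card_union_of_disjoint]
    · congr 1
      ext ij
      simp only [Finset.mem_filter, Finset.mem_union, Finset.mem_univ, true_and]
      omega
    · rw [Finset.disjoint_left]
      intro a ha hb
      simp only [Finset.mem_filter, Finset.mem_univ, true_and] at ha hb
      omega
  have htot : Z.card + (Finset.univ.filter fun ij : Fin 3 × Fin 3 => ¬ p ij.1 ij.2 = 0).card
      = Finset.univ.card :=
    Finset.card_filter_add_card_filter_not _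
  have huniv : (Finset.univ : Finset (Fin 3 × Fin 3)).card = 9 := by decide
  have hZ2 : Z.card = 2 := by
    rw [huniv] at htot
    omega
  obtain ⟨x, y, hxy, hZxy⟩ := Finset.card_eq_two.mp hZ2
  have hmem : ∀ a b : Fin 3, p a b = 0 ↔ ((a, b) = x ∨ (a, b) = y) := by
    intro a b
    constructor
    · intro h
      have : (a, b) ∈ Z := by simp [hZ, h]
      rw [hZxy] at this
      simpa using this
    · rintro (h | h)
      · have hx : x ∈ Z := by rw [hZxy]; simp
        simp only [hZ, Finset.mem_filter] at hx
        rw [← h] at hx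
        exact hx.2
      · have hy : y ∈ Z := by rw [hZxy]; simp
        simp only [hZ, Finset.mem_filter] at hy
        rw [← h] at hy
        exact hy.2
  have hx0 : p x.1 x.2 = 0 := (hmem x.1 x.2).mpr (Or.inl rfl)
  have hy0 : p y.1 y.2 = 0 := (hmem y.1 y.2).mpr (Or.inr rfl)
  -- Step 2: the two zeros lie in distinct rows and distinct columns.
  have hrow : x.1 ≠ y.1 := by
    intro h
    have hcol : x.2 ≠ y.2 := by
      intro h2
      exact hxy (Prod.ext h h2)
    obtain ⟨j₂, hj1, hj2⟩ := exists_third_fin3 x.2 y.2 hcol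
    have h3 : p x.1 j₂ = 0 := by
      apply three_sum_zero (hp.1 x.1) hcol hj1 hj2 hx0
      rw [h]; exact hy0
    rcases (hmem x.1 j₂).mp h3 with heq | heq
    · exact hj1 (congrArg Prod.snd heq).symm
    · have := congrArg Prod.snd heq
      simp at this
      exact hj2 this.symm
  have hcol : x.2 ≠ y.2 := by
    intro h
    obtain ⟨i₂, hi1, hi2⟩ := exists_third_fin3 x.1 y.1 hrow
    have h3 : p i₂ x.2 = 0 := by
      apply three_sum_zero (hp.2 x.2) hrow hi1 hi2 hx0
      rw [h]; exact hy0
    rcases (hmem i₂ x.2).mp h3 with heq | heq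
    · exact hi1 (congrArg Prod.fst heq).symm
    · have := congrArg Prod.fst heq
      simp at this
      exact hi2 this.symm
  -- Step 3: permute to canonical position.
  obtain ⟨σ, hσ0, hσ1⟩ := exists_perm_fin3 x.1 y.1 hrow
  obtain ⟨τ, hτ0, hτ1⟩ := exists_perm_fin3 x.2 y.2 hcol
  suffices h : Concl p by exact h
  apply concl_submatrix σ τ
  set q := p.submatrix σ τ with hq
  have hqp : IsPMatrix q := isPMatrix_submatrix hp σ τ
  have hq00 : q 0 0 = 0 := by simp [hq, Matrix.submatrix_apply, hσ0, hτ0, hx0]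
  have hq11 : q 1 1 = 0 := by simp [hq, Matrix.submatrix_apply, hσ1, hτ1, hy0]
  -- nonzero entries
  have hnz : ∀ a b : Fin 3, (a, b) ≠ x → (a, b) ≠ y → p a b ≠ 0 := by
    intro a b h1 h2 h0
    rcases (hmem a b).mp h0 with h | h
    · exact h1 h
    · exact h2 h
  have hb : q 0 1 ≠ 0 := by
    apply hnz
    · intro h
      have := congrArg Prod.snd h
      simp [hτ1] at this
      exact hcol this.symm
    · intro h
      have := congrArg Prod.fst h
      simp [hσ0] at this
      exact hrow this
  have hc : q 1 0 ≠ 0 := by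
    apply hnz
    · intro h
      have := congrArg Prod.fst h
      simp [hσ1] at this
      exact hrow this.symm
    · intro h
      have := congrArg Prod.snd h
      simp [hτ0] at this
      exact hcol this
  have hd : q 2 2 ≠ 0 := by
    apply hnz
    · intro h
      have := congrArg Prod.fst h
      simp at this
      rw [← hσ0] at this
      have : (2 : Fin 3) = 0 := σ.injective this
      exact absurd this (by decide)
    · intro h
      have := congrArg Prod.fst h
      simp at this
      rw [← hσ1] at this
      have : (2 : Fin 3) = 1 := σ.injective this
      exact absurd this (by decide)
  have hform := pmatrix_form hqp hq00 hq11
  have hbc : q 0 1 + q 1 0 ≠ 0 := by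
    intro h
    apply hd
    rw [hform]
    simp [Matrix.vecHead, Matrix.vecTail]
    omega
  rw [hform]
  exact concl_canon (q 0 1) (q 1 0) hb hc hbc
end

section
/- Let V be a 3×3 unitary complex matrix. Then Im(V₁₂V₂₃ conj(V₁₃) conj(V₂₂)) + Im(V₂₁V₃₃ conj(V₂₃) conj(V₃₁)) = 0, i.e. the rephasing invariants J_A = Im(V₁₂V₂₃V₁₃*V₂₂*) and J_B = Im(V₂₁V₃₃V₂₃*V₃₁*) satisfy J_A + J_B = 0. -/
theorem JA_add_JB_eq_zero
    (V : Matrix (Fin 3) (Fin 3) ℂ) (hV : V ∈ Matrix.unitaryGroup (Fin 3) ℂ) :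
    (V 0 1 * V 1 2 * starRingEnd ℂ (V 0 2) * starRingEnd ℂ (V 1 1)).im +
      (V 1 0 * V 2 2 * starRingEnd ℂ (V 1 2) * starRingEnd ℂ (V 2 0)).im = 0 := by
  have h1 := hV.1
  have h2 := hV.2
  have hE1 : V 0 1 * starRingEnd ℂ (V 0 2) + V 1 1 * starRingEnd ℂ (V 1 2) +
      V 2 1 * starRingEnd ℂ (V 2 2) = 0 := by
    have := congrFun (congrFun h1 2) 1
    simpa [Matrix.mul_apply, Fin.sum_univ_three, Matrix.one_apply, Matrix.star_apply,
      mul_comm] using this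
  have hE2 : V 1 0 * starRingEnd ℂ (V 2 0) + V 1 1 * starRingEnd ℂ (V 2 1) +
      V 1 2 * starRingEnd ℂ (V 2 2) = 0 := by
    have := congrFun (congrFun h2 1) 2
    simpa [Matrix.mul_apply, Fin.sum_univ_three, Matrix.one_apply, Matrix.star_apply] using this
  have key : V 0 1 * V 1 2 * starRingEnd ℂ (V 0 2) * starRingEnd ℂ (V 1 1) +
      V 1 0 * V 2 2 * starRingEnd ℂ (V 1 2) * starRingEnd ℂ (V 2 0)
      = -(V 1 1 * starRingEnd ℂ (V 1 2) * V 1 2 * starRingEnd ℂ (V 1 1))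
        - V 1 2 * starRingEnd ℂ (V 2 2) * V 2 2 * starRingEnd ℂ (V 1 2)
        - (V 2 1 * starRingEnd ℂ (V 2 2) * V 1 2 * starRingEnd ℂ (V 1 1)
          + V 1 1 * starRingEnd ℂ (V 2 1) * V 2 2 * starRingEnd ℂ (V 1 2)) := by
    linear_combination (V 1 2 * starRingEnd ℂ (V 1 1)) * hE1 +
      (V 2 2 * starRingEnd ℂ (V 1 2)) * hE2
  rw [← Complex.add_im, key]
  simp only [Complex.sub_im, Complex.neg_im, Complex.add_im, Complex.mul_im, Complex.mul_re,
    Complex.conj_re, Complex.conj_im]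
  ring
end

section
/- Let V be a 3×3 unitary complex matrix and set J = Im(V₁₁V₂₂ conj(V₁₂) conj(V₂₁)). Then for all indices α, β, i, j ∈ {1,2,3}: Im(V_{αi} V_{βj} conj(V_{αj}) conj(V_{βi})) = J · (∑_{γ=1}^{3} ε_{αβγ}) · (∑_{k=1}^{3} ε_{ijk}), where ε is the totally antisymmetric Levi-Civita symbol with ε₁₂₃ = 1. -/
open scoped BigOperators

/-- The Levi-Civita symbol on three indices `0, 1, 2`, with `ε 0 1 2 = 1`
(corresponding to `ε₁₂₃ = 1` in one-based notation). -/
def leviCivita (a b c : Fin 3) : ℤ :=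
  (((b : ℤ) - (a : ℤ)) * ((c : ℤ) - (a : ℤ)) * ((c : ℤ) - (b : ℤ))) / 2

/-- Auxiliary quantity: the imaginary part of the quartic product. -/
private noncomputable def Tj (V : Matrix (Fin 3) (Fin 3) ℂ) (a b x y : Fin 3) : ℝ :=
  (V a x * V b y * starRingEnd ℂ (V a y) * starRingEnd ℂ (V b x)).im

private lemma Tj_diag_i (V : Matrix (Fin 3) (Fin 3) ℂ) (a b x : Fin 3) :
    Tj V a b x x = 0 := by
  unfold Tj
  simp [Complex.mul_im, Complex.mul_re]
  ring

private lemma Tj_diag_a (V : Matrix (Fin 3) (Fin 3) ℂ) (a x y : Fin 3) :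
    Tj V a a x y = 0 := by
  unfold Tj
  simp [Complex.mul_im, Complex.mul_re]
  ring

private lemma Tj_swap_i (V : Matrix (Fin 3) (Fin 3) ℂ) (a b x y : Fin 3) :
    Tj V a b y x = - Tj V a b x y := by
  unfold Tj
  simp [Complex.mul_im, Complex.mul_re]
  ring

private lemma Tj_swap_a (V : Matrix (Fin 3) (Fin 3) ℂ) (a b x y : Fin 3) :
    Tj V b a x y = - Tj V a b x y := by
  unfold Tj
  simp [Complex.mul_im, Complex.mul_re]
  ring

private lemma Tj_row (V : Matrix (Fin 3) (Fin 3) ℂ)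
    (hV : V ∈ Matrix.unitaryGroup (Fin 3) ℂ) (a b : Fin 3) (hab : a ≠ b) (y : Fin 3) :
    Tj V a b 0 y + Tj V a b 1 y + Tj V a b 2 y = 0 := by
  have h0 : ∑ k : Fin 3, V a k * starRingEnd ℂ (V b k) = 0 := by
    have h := (Matrix.mem_unitaryGroup_iff.mp hV)
    have h2 := congrArg (fun M => M a b) h
    simpa [Matrix.mul_apply, Matrix.one_apply_ne hab, Matrix.star_apply] using h2
  have h1 : ((∑ k : Fin 3, V a k * starRingEnd ℂ (V b k)) *
      (V b y * starRingEnd ℂ (V a y))).im = 0 := by rw [h0]; simp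
  rw [Finset.sum_mul, Complex.im_sum, Fin.sum_univ_three] at h1
  have e : ∀ x : Fin 3, (V a x * starRingEnd ℂ (V b x) * (V b y * starRingEnd ℂ (V a y))).im
      = Tj V a b x y := by
    intro x; unfold Tj; ring_nf
  rw [e 0, e 1, e 2] at h1
  exact h1

private lemma Tj_col (V : Matrix (Fin 3) (Fin 3) ℂ)
    (hV : V ∈ Matrix.unitaryGroup (Fin 3) ℂ) (x y : Fin 3) (hxy : x ≠ y) (b : Fin 3) :
    Tj V 0 b x y + Tj V 1 b x y + Tj V 2 b x y = 0 := by
  have h0 : ∑ k : Fin 3, starRingEnd ℂ (V k y) * V k x = 0 := by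
    have h := (Matrix.mem_unitaryGroup_iff'.mp hV)
    have h2 := congrArg (fun M => M y x) h
    simpa [Matrix.mul_apply, Matrix.one_apply_ne (Ne.symm hxy), Matrix.star_apply] using h2
  have h1 : ((∑ k : Fin 3, starRingEnd ℂ (V k y) * V k x) *
      (V b y * starRingEnd ℂ (V b x))).im = 0 := by rw [h0]; simp
  rw [Finset.sum_mul, Complex.im_sum, Fin.sum_univ_three] at h1
  have e : ∀ a : Fin 3, (starRingEnd ℂ (V a y) * V a x * (V b y * starRingEnd ℂ (V b x))).im
      = Tj V a b x y := by
    intro a; unfold Tj; ring_nf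
  rw [e 0, e 1, e 2] at h1
  exact h1

private lemma Tj_step1 (V : Matrix (Fin 3) (Fin 3) ℂ)
    (hV : V ∈ Matrix.unitaryGroup (Fin 3) ℂ) (a b x y : Fin 3) :
    Tj V a b x y = Tj V a b 0 1 * ((∑ k : Fin 3, leviCivita x y k : ℤ) : ℝ) := by
  by_cases hab : a = b
  · subst hab; rw [Tj_diag_a, Tj_diag_a]; ring
  · have hx : x = 0 ∨ x = 1 ∨ x = 2 := by omega
    have hy : y = 0 ∨ y = 1 ∨ y = 2 := by omega
    rcases hx with rfl | rfl | rfl <;> rcases hy with rfl | rfl | rfl <;>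
      norm_num [Fin.sum_univ_three, leviCivita] <;>
      linarith [Tj_row V hV a b hab 0, Tj_row V hV a b hab 1, Tj_row V hV a b hab 2,
        Tj_diag_i V a b 0, Tj_diag_i V a b 1, Tj_diag_i V a b 2,
        Tj_swap_i V a b 0 1, Tj_swap_i V a b 0 2, Tj_swap_i V a b 1 2]

private lemma Tj_step2 (V : Matrix (Fin 3) (Fin 3) ℂ)
    (hV : V ∈ Matrix.unitaryGroup (Fin 3) ℂ) (a b : Fin 3) :
    Tj V a b 0 1 = Tj V 0 1 0 1 * ((∑ γ : Fin 3, leviCivita a b γ : ℤ) : ℝ) := by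
  have h01 : (0 : Fin 3) ≠ 1 := by decide
  have ha : a = 0 ∨ a = 1 ∨ a = 2 := by omega
  have hb : b = 0 ∨ b = 1 ∨ b = 2 := by omega
  rcases ha with rfl | rfl | rfl <;> rcases hb with rfl | rfl | rfl <;>
    norm_num [Fin.sum_univ_three, leviCivita] <;>
    linarith [Tj_col V hV 0 1 h01 0, Tj_col V hV 0 1 h01 1, Tj_col V hV 0 1 h01 2,
      Tj_diag_a V 0 0 1, Tj_diag_a V 1 0 1, Tj_diag_a V 2 0 1,
      Tj_swap_a V 0 1 0 1, Tj_swap_a V 0 2 0 1, Tj_swap_a V 1 2 0 1]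

theorem jarlskog_formula
    (V : Matrix (Fin 3) (Fin 3) ℂ) (hV : V ∈ Matrix.unitaryGroup (Fin 3) ℂ)
    (J : ℝ) (hJ : J = (V 0 0 * V 1 1 * starRingEnd ℂ (V 0 1) * starRingEnd ℂ (V 1 0)).im)
    (α β i j : Fin 3) :
    (V α i * V β j * starRingEnd ℂ (V α j) * starRingEnd ℂ (V β i)).im =
      J * ((∑ γ : Fin 3, leviCivita α β γ : ℤ) : ℝ) *
        ((∑ k : Fin 3, leviCivita i j k : ℤ) : ℝ) := by
  have hJ' : J = Tj V 0 1 0 1 := hJ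
  have key : Tj V α β i j = J * ((∑ γ : Fin 3, leviCivita α β γ : ℤ) : ℝ) *
      ((∑ k : Fin 3, leviCivita i j k : ℤ) : ℝ) := by
    rw [Tj_step1 V hV, Tj_step2 V hV, hJ']; try ring
  exact key
end

section
/- Let V be a 3×3 unitary complex matrix. Then the 6th-order rephasing invariant I₁ = V₁₁V₂₂V₃₃ conj(V₁₃) conj(V₂₁) conj(V₃₂) satisfies I₁ = −|V₂₂|² · V₁₂V₃₃ conj(V₁₃) conj(V₃₂) − |V₁₃|² · V₂₂V₃₃ conj(V₂₃) conj(V₃₂); that is, I₁ is an integer-coefficient combination of squared moduli of entries of V times the 4th-order invariants J₆ = V₁₂V₃₃V₁₃*V₃₂* and J₉ = V₂₂V₃₃V₂₃*V₃₂*, namely I₁ = −|V₂₂|²J₆ − |V₁₃|²J₉. -/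
theorem sixth_order_invariant_via_fourth_order
    (V : Matrix (Fin 3) (Fin 3) ℂ) (hV : V ∈ Matrix.unitaryGroup (Fin 3) ℂ) :
    V 0 0 * V 1 1 * V 2 2 * starRingEnd ℂ (V 0 2) * starRingEnd ℂ (V 1 0) *
        starRingEnd ℂ (V 2 1) =
      -((Complex.normSq (V 1 1) : ℂ)) *
          (V 0 1 * V 2 2 * starRingEnd ℂ (V 0 2) * starRingEnd ℂ (V 2 1)) -
        ((Complex.normSq (V 0 2) : ℂ)) *
          (V 1 1 * V 2 2 * starRingEnd ℂ (V 1 2) * starRingEnd ℂ (V 2 1)) := by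
  have hmul : V * star V = 1 := Matrix.mem_unitaryGroup_iff.mp hV
  have h : (V * star V) 0 1 = (1 : Matrix (Fin 3) (Fin 3) ℂ) 0 1 := by rw [hmul]
  simp only [Matrix.mul_apply, Matrix.star_apply, Matrix.one_apply, Fin.sum_univ_three,
    if_neg (by decide : (0 : Fin 3) ≠ 1), Complex.star_def] at h
  rw [← Complex.mul_conj, ← Complex.mul_conj]
  linear_combination (V 1 1 * V 2 2 * starRingEnd ℂ (V 0 2) * starRingEnd ℂ (V 2 1)) * h
end
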